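/- arXiv:1209.4073 — 3 statements merged into one kernel-verified Lean document; each statement's English description precedes it below -/
import Mathlib

section
/- Let M be a nonnegative square matrix in block upper-triangular form M = [[A, C],[0, B]] where A and B are square blocks. If M has a strictly positive left eigenvector with eigenvalue λ, then the spectral radius of every diagonal block is at most λ. -/
open Matrix Finset in
lemma key_lemma {n : Type*} [Fintype n] [DecidableEq n] (B : Matrix n n ℝ)
    (hB : ∀ i j, 0 ≤ B i j) (lam : ℝ) (w : n → ℝ) (hw : ∀ i, 0 < w i)
    (hle : ∀ j, (Matrix.vecMul w B) j ≤ lam * w j) :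
    ∀ z ∈ spectrum ℂ (B.map Complex.ofReal), ‖z‖ ≤ lam := by
  intro z hz
  rw [spectrum.mem_iff] at hz
  rw [Matrix.isUnit_iff_isUnit_det, isUnit_iff_ne_zero, not_not] at hz
  obtain ⟨x, hx0, hx⟩ := (Matrix.exists_mulVec_eq_zero_iff).2 hz
  have hxeig' : (B.map Complex.ofReal) *ᵥ x = z • x := by
    rw [Matrix.sub_mulVec, sub_eq_zero] at hx
    rw [← hx, Algebra.algebraMap_eq_smul_one, Matrix.smul_mulVec, Matrix.one_mulVec]
  have hxeig : ∀ j, ((B.map Complex.ofReal) *ᵥ x) j = z * x j := fun j => by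
    rw [hxeig']; simp
  set S : ℝ := ∑ j, w j * ‖x j‖ with hS
  have hSpos : 0 < S := by
    obtain ⟨j, hj⟩ := Function.ne_iff.mp hx0
    have : 0 < w j * ‖x j‖ :=
      mul_pos (hw j) (by simpa using hj)
    refine Finset.sum_pos' (fun i _ => mul_nonneg (hw i).le (by positivity)) ⟨j, mem_univ j, this⟩
  have hbound : ∀ j, ‖z‖ * ‖x j‖ ≤ ∑ k, B j k * ‖x k‖ := by
    intro j
    rw [← norm_mul, ← hxeig j]
    calc ‖(B.map Complex.ofReal).mulVec x j‖
        ≤ ∑ k, ‖(B j k : ℂ) * x k‖ := by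
          simpa [Matrix.mulVec, Matrix.map_apply, dotProduct] using
            (norm_sum_le univ (fun k => (B j k : ℂ) * x k))
      _ = ∑ k, B j k * ‖x k‖ := by
          refine Finset.sum_congr rfl fun k _ => ?_
          rw [norm_mul, Complex.norm_real, Real.norm_eq_abs, abs_of_nonneg (hB j k)]
  have hmain : ‖z‖ * S ≤ lam * S := by
    calc ‖z‖ * S = ∑ j, w j * (‖z‖ * ‖x j‖) := by
          rw [hS, Finset.mul_sum]; exact Finset.sum_congr rfl fun _ _ => by ring
      _ ≤ ∑ j, w j * ∑ k, B j k * ‖x k‖ := by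
          refine Finset.sum_le_sum fun j _ => mul_le_mul_of_nonneg_left (hbound j) (hw j).le
      _ = ∑ k, (Matrix.vecMul w B) k * ‖x k‖ := by
          simp_rw [Finset.mul_sum]
          rw [Finset.sum_comm]
          refine Finset.sum_congr rfl fun k _ => ?_
          rw [Matrix.vecMul, dotProduct, Finset.sum_mul]
          exact Finset.sum_congr rfl fun _ _ => by ring
      _ ≤ ∑ k, lam * w k * ‖x k‖ := by
          refine Finset.sum_le_sum fun k _ => mul_le_mul_of_nonneg_right (hle k) (by positivity)
      _ = lam * S := by rw [hS, Finset.mul_sum]; exact Finset.sum_congr rfl fun _ _ => by ring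
  exact le_of_mul_le_mul_right hmain hSpos

/-- If a nonnegative block upper-triangular matrix `M = [[A, C], [0, B]]` has a strictly
positive left eigenvector `v` with eigenvalue `λ`, then the spectral radius of each
diagonal block (`A` and `B`) is at most `λ`: every complex eigenvalue of each block has
modulus at most `λ`. -/
theorem spectral_radius_of_blocks_le_of_positive_left_eigenvector
    {m n : Type*} [Fintype m] [Fintype n] [DecidableEq m] [DecidableEq n]
    (M : Matrix (m ⊕ n) (m ⊕ n) ℝ)
    (hnonneg : ∀ i j, 0 ≤ M i j)
    (hblock : ∀ i j, M (Sum.inr i) (Sum.inl j) = 0)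
    (lam : ℝ) (v : (m ⊕ n) → ℝ)
    (hvpos : ∀ i, 0 < v i)
    (heig : Matrix.vecMul v M = lam • v) :
    (∀ z ∈ spectrum ℂ ((M.submatrix Sum.inl Sum.inl).map Complex.ofReal),
        ‖z‖ ≤ lam) ∧
    (∀ z ∈ spectrum ℂ ((M.submatrix Sum.inr Sum.inr).map Complex.ofReal),
        ‖z‖ ≤ lam) := by
  constructor
  · refine key_lemma _ (fun i j => hnonneg _ _) lam (fun i => v (Sum.inl i))
      (fun i => hvpos _) (fun j => ?_)
    have h := congrFun heig (Sum.inl j)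
    simp only [Matrix.vecMul, dotProduct, Fintype.sum_sum_type, Pi.smul_apply,
      smul_eq_mul] at h
    simp only [hblock, mul_zero, Finset.sum_const_zero, add_zero] at h
    simpa [Matrix.vecMul, dotProduct, Matrix.submatrix_apply] using h.le
  · refine key_lemma _ (fun i j => hnonneg _ _) lam (fun i => v (Sum.inr i))
      (fun i => hvpos _) (fun j => ?_)
    have h := congrFun heig (Sum.inr j)
    simp only [Matrix.vecMul, dotProduct, Fintype.sum_sum_type, Pi.smul_apply,
      smul_eq_mul] at h
    have hnn : 0 ≤ ∑ i, v (Sum.inl i) * M (Sum.inl i) (Sum.inr j) :=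
      Finset.sum_nonneg fun i _ => mul_nonneg (hvpos _).le (hnonneg _ _)
    have : ∑ i, v (Sum.inr i) * M (Sum.inr i) (Sum.inr j) ≤ lam * v (Sum.inr j) := by
      linarith
    simpa [Matrix.vecMul, dotProduct, Matrix.submatrix_apply] using this
end

section
/- Let S be the edge shift on a finite directed graph G with primitive incidence matrix Bᵗ and Parry measure ν̄, and fix for each vertex Q one distinguished outgoing edge e_Q. Then the set of two-sided paths (e_n)_{n∈ℤ} that use distinguished edges only finitely many times among negative indices n < 0 has ν̄-measure zero. -/
open MeasureTheory Finset
set_option linter.unusedSectionVars false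

section PathCount
variable {V E : Type*} [Fintype V] [DecidableEq V] [Fintype E] [DecidableEq E]

/-- number of admissible words of length `N` from `i` to `j` using only edges satisfying `P`. -/
def pathCount (src rng : E → V) (P : E → Prop) [DecidablePred P] :
    ℕ → V → V → ℕ
  | 0, i, j => if i = j then 1 else 0
  | (N+1), i, j => ∑ e : E, if src e = i ∧ P e then pathCount src rng P N (rng e) j else 0

variable (src rng : E → V) (P : E → Prop) [DecidablePred P]

lemma pathCount_concat (N M : ℕ) (i j : V) :
    pathCount src rng P (N + M) i j
      = ∑ q : V, pathCount src rng P N i q * pathCount src rng P M q j := by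
  induction N generalizing i with
  | zero =>
      simp [pathCount]
  | succ N ih =>
      have : N + 1 + M = (N + M) + 1 := by omega
      rw [this]
      simp only [pathCount]
      rw [show ∀ F : V → E → ℕ, ∑ x : V, (∑ e : E, F x e) * pathCount src rng P M x j
            = ∑ e : E, ∑ x : V, F x e * pathCount src rng P M x j from
          fun F => by rw [Finset.sum_comm]; simp [Finset.sum_mul]]
      refine Finset.sum_congr rfl fun e _ => ?_
      split
      · rw [ih]
      · simp


lemma pathCount_mono (Q : E → Prop) [DecidablePred Q] (hPQ : ∀ e, P e → Q e)
    (N : ℕ) (i j : V) :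
    pathCount src rng P N i j ≤ pathCount src rng Q N i j := by
  induction N generalizing i with
  | zero => simp [pathCount]
  | succ N ih =>
      simp only [pathCount]
      refine Finset.sum_le_sum fun e _ => ?_
      by_cases h : src e = i ∧ P e
      · rw [if_pos h, if_pos ⟨h.1, hPQ e h.2⟩]; exact ih _
      · rw [if_neg h]; exact Nat.zero_le _

lemma pathCount_true_eq (B : Matrix V V ℕ)
    (hcard : ∀ i j, Fintype.card {e : E // src e = i ∧ rng e = j} = B j i)
    (N : ℕ) (i j : V) :
    pathCount src rng (fun _ => True) N i j = (B ^ N) j i := by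
  induction N generalizing i with
  | zero => simp [pathCount, Matrix.one_apply, eq_comm]
  | succ N ih =>
      simp only [pathCount, and_true]
      have grp : (∑ e : E, if src e = i then
            pathCount src rng (fun _ => True) N (rng e) j else 0)
          = ∑ q : V, ∑ e : E, if src e = i ∧ rng e = q then
            pathCount src rng (fun _ => True) N q j else 0 := by
        rw [Finset.sum_comm]
        refine Finset.sum_congr rfl fun e _ => ?_
        by_cases h : src e = i
        · rw [Finset.sum_eq_single (rng e)]
          · simp [h]
          · intro b _ hb; rw [if_neg (by tauto)]
          · simp
        · simp [h]
      rw [grp]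
      rw [pow_succ, Matrix.mul_apply]
      refine Finset.sum_congr rfl fun q _ => ?_
      rw [Finset.sum_ite, Finset.sum_const, Finset.sum_const_zero, add_zero,
        smul_eq_mul]
      have : (Finset.univ.filter (fun e => src e = i ∧ rng e = q)).card = B q i := by
        rw [← hcard i q, Fintype.card_subtype]
      rw [this, ih q, mul_comm]


lemma eigen_pow (B : Matrix V V ℕ) (u : V → ℝ) (r : ℝ)
    (hu : ∀ j, ∑ i, u i * (B j i : ℝ) = r * u j) (N : ℕ) (j : V) :
    ∑ i, u i * ((B ^ N) j i : ℝ) = r ^ N * u j := by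
  induction N generalizing j with
  | zero => simp [Matrix.one_apply, eq_comm]
  | succ N ih =>
      have expand : ∀ i, (((B ^ (N + 1)) j i : ℕ) : ℝ)
          = ∑ q, (B j q : ℝ) * ((B ^ N) q i : ℝ) := by
        intro i
        rw [pow_succ', Matrix.mul_apply]
        push_cast
        rfl
      calc ∑ i, u i * (((B ^ (N + 1)) j i : ℕ) : ℝ)
          = ∑ q, (∑ i, u i * ((B ^ N) q i : ℝ)) * (B j q : ℝ) := by
            simp only [expand, Finset.mul_sum, Finset.sum_mul]
            rw [Finset.sum_comm]
            exact Finset.sum_congr rfl fun q _ => Finset.sum_congr rfl fun i _ => by ring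
        _ = ∑ q, (r ^ N * u q) * (B j q : ℝ) := by simp only [ih]
        _ = r ^ N * (r * u j) := by
            rw [← hu j, Finset.mul_sum]
            refine Finset.sum_congr rfl fun q _ => by ring
        _ = r ^ (N + 1) * u j := by ring

lemma pathCount_subtract (D : V → E) (hD : ∀ Q, src (D Q) = Q)
    (good : E → Prop) [DecidablePred good] (hgood : ∀ e, good e → ∀ Q, e ≠ D Q)
    (N : ℕ) (i j : V) :
    pathCount src rng good (N + 1) i j
        + pathCount src rng (fun _ => True) N (rng (D i)) j
      ≤ pathCount src rng (fun _ => True) (N + 1) i j := by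
  simp only [pathCount, and_true]
  have key : ∀ e : E, e ∈ Finset.univ.erase (D i) →
      (if src e = i ∧ good e then pathCount src rng good N (rng e) j else 0)
        ≤ (if src e = i then pathCount src rng (fun _ => True) N (rng e) j else 0) := by
    intro e _
    by_cases h : src e = i ∧ good e
    · rw [if_pos h, if_pos h.1]
      exact pathCount_mono src rng good (fun _ => True) (fun _ _ => trivial) N _ j
    · rw [if_neg h]; exact Nat.zero_le _
  have h1 : (∑ e : E, if src e = i ∧ good e then pathCount src rng good N (rng e) j else 0)
      = ∑ e ∈ Finset.univ.erase (D i),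
          if src e = i ∧ good e then pathCount src rng good N (rng e) j else 0 := by
    rw [Finset.sum_erase]
    rw [if_neg]
    rintro ⟨-, hg⟩
    exact hgood _ hg i rfl
  have h2 : (∑ e : E, if src e = i then pathCount src rng (fun _ => True) N (rng e) j else 0)
      = (if src (D i) = i then pathCount src rng (fun _ => True) N (rng (D i)) j else 0)
        + ∑ e ∈ Finset.univ.erase (D i),
            if src e = i then pathCount src rng (fun _ => True) N (rng e) j else 0 := by
    exact (Finset.add_sum_erase _ _ (Finset.mem_univ (D i))).symm
  rw [h1, h2, if_pos (hD i), add_comm]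
  exact Nat.add_le_add le_rfl (Finset.sum_le_sum key)


lemma bridge (P : E → Prop) [DecidablePred P] :
    ∀ (N : ℕ) (f g : V → ℝ),
    (∑ w : Fin (N+1) → E,
      if (∀ i : Fin N, src (w i.succ) = rng (w i.castSucc)) ∧ (∀ i, P (w i))
      then f (src (w 0)) * g (rng (w (Fin.last N))) else 0)
      = ∑ i, ∑ j, f i * (pathCount src rng P (N+1) i j : ℝ) * g j := by
  intro N
  induction N with
  | zero =>
      intro f g
      have lhs : (∑ w : Fin 1 → E,
          if (∀ i : Fin 0, src (w i.succ) = rng (w i.castSucc)) ∧ (∀ i, P (w i))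
          then f (src (w 0)) * g (rng (w (Fin.last 0))) else 0)
          = ∑ e : E, if P e then f (src e) * g (rng e) else 0 := by
        rw [← Equiv.sum_comp (Equiv.funUnique (Fin 1) E).symm]
        refine Finset.sum_congr rfl fun e _ => ?_
        simp [Fin.last]
      rw [lhs]
      have rhs : ∀ i j : V, (pathCount src rng P 1 i j : ℝ)
          = ∑ e : E, if src e = i ∧ P e then (if rng e = j then (1:ℝ) else 0) else 0 := by
        intro i j
        simp only [pathCount]
        push_cast
        refine Finset.sum_congr rfl fun e _ => ?_
        by_cases h1 : src e = i ∧ P e <;> by_cases h2 : rng e = j <;> simp [h1, h2]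
      calc (∑ e : E, if P e then f (src e) * g (rng e) else 0)
          = ∑ e : E, ∑ i, ∑ j, (if src e = i ∧ P e ∧ rng e = j then f i * g j else 0) := by
            refine Finset.sum_congr rfl fun e _ => ?_
            by_cases hP : P e
            · rw [if_pos hP, Finset.sum_eq_single (src e)]
              · rw [Finset.sum_eq_single (rng e)]
                · rw [if_pos ⟨rfl, hP, rfl⟩]
                · intro b _ hb; rw [if_neg (by tauto)]
                · simp
              · intro b _ hb
                exact Finset.sum_eq_zero fun j _ => by rw [if_neg (by tauto)]
              · simp
            · rw [if_neg hP]
              exact (Finset.sum_eq_zero fun i _ =>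
                Finset.sum_eq_zero fun j _ => by rw [if_neg (by tauto)]).symm
        _ = ∑ i, ∑ j, ∑ e : E, (if src e = i ∧ P e ∧ rng e = j then f i * g j else 0) := by
            rw [Finset.sum_comm]
            exact Finset.sum_congr rfl fun i _ => Finset.sum_comm
        _ = ∑ i, ∑ j, f i * (pathCount src rng P 1 i j : ℝ) * g j := by
            refine Finset.sum_congr rfl fun i _ => Finset.sum_congr rfl fun j _ => ?_
            rw [rhs i j, Finset.mul_sum, Finset.sum_mul]
            refine Finset.sum_congr rfl fun e _ => ?_
            by_cases h1 : src e = i ∧ P e <;> by_cases h2 : rng e = j <;>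
              simp [h1, h2] <;> tauto
  | succ N ih =>
      intro f g
      rw [← Equiv.sum_comp (Fin.consEquiv (fun _ : Fin (N + 2) => E)), Fintype.sum_prod_type]
      have cons_path : ∀ (e : E) (w' : Fin (N+1) → E),
          ((∀ i : Fin (N+1), src ((Fin.cons e w' : Fin (N+2) → E) i.succ)
              = rng ((Fin.cons e w' : Fin (N+2) → E) i.castSucc))
            ↔ (src (w' 0) = rng e ∧ ∀ i : Fin N, src (w' i.succ) = rng (w' i.castSucc))) := by
        intro e w'
        constructor
        · intro h
          refine ⟨by simpa using h 0, fun i => ?_⟩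
          have := h i.succ
          rwa [Fin.cons_succ, ← Fin.succ_castSucc, Fin.cons_succ] at this
        · rintro ⟨h0, h1⟩ i
          induction i using Fin.cases with
          | zero => simpa using h0
          | succ j =>
              rw [Fin.cons_succ, ← Fin.succ_castSucc, Fin.cons_succ]
              exact h1 j
      have cons_all : ∀ (e : E) (w' : Fin (N+1) → E),
          ((∀ i : Fin (N+2), P ((Fin.cons e w' : Fin (N+2) → E) i)) ↔ (P e ∧ ∀ i, P (w' i))) := by
        intro e w'
        rw [Fin.forall_fin_succ]
        simp [Fin.cons_succ]
      have step1 : ∀ e : E, (∑ w' : Fin (N+1) → E,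
          if (∀ i : Fin (N+1), src ((Fin.cons e w' : Fin (N+2) → E) i.succ)
                = rng ((Fin.cons e w' : Fin (N+2) → E) i.castSucc))
              ∧ (∀ i, P ((Fin.cons e w' : Fin (N+2) → E) i))
          then f (src ((Fin.cons e w' : Fin (N+2) → E) 0))
              * g (rng ((Fin.cons e w' : Fin (N+2) → E) (Fin.last (N+1)))) else 0)
          = if P e then ∑ j, f (src e) * (pathCount src rng P (N+1) (rng e) j : ℝ) * g j
            else 0 := by
        intro e
        by_cases hP : P e
        · rw [if_pos hP]
          have key := ih (fun q => if q = rng e then f (src e) else 0) g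
          have collapse : ∑ i, ∑ j, (if i = rng e then f (src e) else 0)
                * (pathCount src rng P (N+1) i j : ℝ) * g j
              = ∑ j, f (src e) * (pathCount src rng P (N+1) (rng e) j : ℝ) * g j := by
            rw [Finset.sum_eq_single (rng e)]
            · exact Finset.sum_congr rfl fun j _ => by rw [if_pos rfl]
            · intro b _ hb
              exact Finset.sum_eq_zero fun j _ => by rw [if_neg hb]; ring
            · simp
          rw [← collapse, ← key]
          refine Finset.sum_congr rfl fun w' _ => ?_
          rw [if_congr (and_congr (cons_path e w') (cons_all e w'))
            (by rw [Fin.cons_zero, ← Fin.succ_last, Fin.cons_succ]) rfl]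
          by_cases h1 : src (w' 0) = rng e <;>
            by_cases h2 : (∀ i : Fin N, src (w' i.succ) = rng (w' i.castSucc)) <;>
            by_cases h3 : (∀ i, P (w' i)) <;>
            simp [h1, h2, h3, hP]
        · rw [if_neg hP]
          refine Finset.sum_eq_zero fun w' _ => ?_
          rw [if_neg]
          rw [cons_all]
          tauto
      have rhs : ∀ i j : V, (pathCount src rng P (N+2) i j : ℝ)
          = ∑ e : E, if src e = i ∧ P e then (pathCount src rng P (N+1) (rng e) j : ℝ) else 0 := by
        intro i j
        show ((pathCount src rng P ((N+1)+1) i j : ℕ) : ℝ) = _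
        simp only [pathCount]
        push_cast
        refine Finset.sum_congr rfl fun e _ => ?_
        split <;> simp
      calc (∑ e : E, ∑ w' : Fin (N+1) → E, _)
          = ∑ e : E, (if P e then
              ∑ j, f (src e) * (pathCount src rng P (N+1) (rng e) j : ℝ) * g j else 0) := by
            refine Finset.sum_congr rfl fun e _ => ?_
            rw [← step1 e]
            refine Finset.sum_congr rfl fun w' _ => ?_
            rfl
        _ = ∑ e : E, ∑ i, ∑ j,
              (if src e = i ∧ P e then f i * (pathCount src rng P (N+1) (rng e) j : ℝ) * g j
               else 0) := by
            refine Finset.sum_congr rfl fun e _ => ?_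
            symm
            by_cases hP : P e
            · rw [Finset.sum_eq_single (src e)]
              · rw [if_pos hP]
                exact Finset.sum_congr rfl fun j _ => by rw [if_pos ⟨rfl, hP⟩]
              · intro b _ hb
                exact Finset.sum_eq_zero fun j _ => by rw [if_neg (by tauto)]
              · simp
            · rw [if_neg hP]
              exact Finset.sum_eq_zero fun i _ =>
                Finset.sum_eq_zero fun j _ => by rw [if_neg (by tauto)]
        _ = ∑ i, ∑ j, ∑ e : E,
              (if src e = i ∧ P e then f i * (pathCount src rng P (N+1) (rng e) j : ℝ) * g j
               else 0) := by
            rw [Finset.sum_comm]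
            exact Finset.sum_congr rfl fun i _ => Finset.sum_comm
        _ = ∑ i, ∑ j, f i * (pathCount src rng P (N+2) i j : ℝ) * g j := by
            refine Finset.sum_congr rfl fun i _ => Finset.sum_congr rfl fun j _ => ?_
            rw [rhs i j, Finset.mul_sum, Finset.sum_mul]
            refine Finset.sum_congr rfl fun e _ => ?_
            split <;> ring

end PathCount


/-- In the two-sided edge shift with Parry measure (cylinder masses
`u_{src(e_1)} v_{rng(e_n)} / r^n`, `B` primitive with `ρ(B) = r > 1` and each vertex
having at least two outgoing edges), if one distinguished outgoing edge `D Q` is fixed at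
each vertex `Q`, then the set of two-sided paths that use distinguished edges only
finitely many times among negative indices has Parry measure zero. -/
theorem parry_measure_rare_distinguished_edges
    {V E : Type*} [Fintype V] [DecidableEq V] [Fintype E] [DecidableEq E]
    [MeasurableSpace E] [MeasurableSingletonClass E]
    (src rng : E → V)
    (B : Matrix V V ℕ)
    (hcard : ∀ i j, Fintype.card {e : E // src e = i ∧ rng e = j} = B j i)
    (hprim : ∃ k : ℕ, 0 < k ∧ ∀ i j, 0 < (B ^ k) i j)
    (houtgoing : ∀ Q : V, 2 ≤ Fintype.card {e : E // src e = Q})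
    (r : ℝ) (hr : 1 < r)
    (u v : V → ℝ) (hupos : ∀ Q, 0 < u Q) (hvpos : ∀ Q, 0 < v Q)
    (hu : ∀ j, ∑ i, u i * (B j i : ℝ) = r * u j)
    (hv : ∀ i, ∑ j, (B j i : ℝ) * v j = r * v i)
    (hnorm : ∑ Q, u Q * v Q = 1)
    (D : V → E) (hD : ∀ Q, src (D Q) = Q)
    (ν : Measure {x : ℤ → E // ∀ n, src (x (n + 1)) = rng (x n)})
    (hprob : IsProbabilityMeasure ν)
    (hinv : ∀ A : Set {x : ℤ → E // ∀ n, src (x (n + 1)) = rng (x n)},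
      MeasurableSet A →
      ν ((fun x : {x : ℤ → E // ∀ n, src (x (n + 1)) = rng (x n)} =>
          (⟨fun n => x.1 (n + 1), fun n => x.2 (n + 1)⟩ :
            {x : ℤ → E // ∀ n, src (x (n + 1)) = rng (x n)})) ⁻¹' A) = ν A)
    (hcyl : ∀ (k : ℤ) (n : ℕ) (wd : Fin (n + 1) → E),
      (∀ i : Fin n, src (wd i.succ) = rng (wd i.castSucc)) →
      ν {x | ∀ i : Fin (n + 1), x.1 (k + (i.val : ℤ)) = wd i} =
        ENNReal.ofReal (u (src (wd 0)) * v (rng (wd (Fin.last n))) / r ^ (n + 1))) :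
    ν {x : {x : ℤ → E // ∀ n, src (x (n + 1)) = rng (x n)} |
        {n : ℤ | n < 0 ∧ ∃ Q : V, x.1 n = D Q}.Finite} = 0 := by
  classical
  by_cases hV : Nonempty V
  swap
  · haveI : IsEmpty E := ⟨fun e => hV ⟨src e⟩⟩
    haveI : IsEmpty {x : ℤ → E // ∀ n, src (x (n + 1)) = rng (x n)} :=
      ⟨fun x => IsEmpty.false (x.1 0)⟩
    have he : {x : {x : ℤ → E // ∀ n, src (x (n + 1)) = rng (x n)} |
        {n : ℤ | n < 0 ∧ ∃ Q : V, x.1 n = D Q}.Finite} = ∅ :=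
      Set.eq_empty_of_isEmpty _
    rw [he]
    exact measure_empty
  haveI := hV
  obtain ⟨k, hkpos, hBk⟩ := hprim
  set good : E → Prop := fun e => ∀ Q : V, e ≠ D Q with good_def
  have hrpos : (0:ℝ) < r := lt_trans zero_lt_one hr
  have hrpow : ∀ n : ℕ, (0:ℝ) < r ^ n := fun n => pow_pos hrpos n
  -- constants
  set umax : ℝ := Finset.univ.sup' Finset.univ_nonempty u with umax_def
  set umin : ℝ := Finset.univ.inf' Finset.univ_nonempty u with umin_def
  have humax : ∀ q : V, u q ≤ umax := fun q => Finset.le_sup' u (Finset.mem_univ q)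
  have humin : ∀ q : V, umin ≤ u q := fun q => Finset.inf'_le u (Finset.mem_univ q)
  have huminpos : 0 < umin := by
    obtain ⟨q, -, hq⟩ := Finset.exists_mem_eq_inf' Finset.univ_nonempty u
    rw [umin_def, hq]; exact hupos q
  have humaxpos : 0 < umax := lt_of_lt_of_le huminpos ((humin (Classical.arbitrary V)).trans (humax (Classical.arbitrary V)))
  set c : ℝ := 1 - umin / (r ^ (k+1) * umax) with c_def
  have hcnonneg : 0 ≤ c := by
    rw [c_def, sub_nonneg, div_le_one (by positivity)]
    calc umin ≤ umax := (humin (Classical.arbitrary V)).trans (humax _)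
      _ ≤ r ^ (k+1) * umax := le_mul_of_one_le_left humaxpos.le (one_le_pow₀ hr.le)
  have hclt : c < 1 := by
    rw [c_def]
    have : 0 < umin / (r ^ (k+1) * umax) := by positivity
    linarith
  -- key one-block estimate
  have key : ∀ j : V, ∑ q, u q * (pathCount src rng good (k+1) q j : ℝ)
      ≤ c * (r ^ (k+1) * u j) := by
    intro j
    have hsub : ∀ q : V, (pathCount src rng good (k+1) q j : ℝ)
        ≤ (pathCount src rng (fun _ => True) (k+1) q j : ℝ)
          - (pathCount src rng (fun _ => True) k (rng (D q)) j : ℝ) := by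
      intro q
      have := pathCount_subtract src rng D hD good (fun e he Q => he Q) k q j
      have := (Nat.cast_le (α := ℝ)).2 this
      push_cast at this
      linarith
    have hone : ∀ q' : V, (1:ℝ) ≤ (pathCount src rng (fun _ => True) k q' j : ℝ) := by
      intro q'
      have := pathCount_true_eq src rng B hcard k q' j
      rw [this]
      exact_mod_cast hBk j q'
    have step1 : ∑ q, u q * (pathCount src rng good (k+1) q j : ℝ)
        ≤ ∑ q, u q * (pathCount src rng (fun _ => True) (k+1) q j : ℝ)
          - ∑ q, u q * (pathCount src rng (fun _ => True) k (rng (D q)) j : ℝ) := by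
      rw [← Finset.sum_sub_distrib]
      refine Finset.sum_le_sum fun q _ => ?_
      have := hsub q
      nlinarith [hupos q, (hupos q).le]
    have heig : ∑ q, u q * (pathCount src rng (fun _ => True) (k+1) q j : ℝ)
        = r ^ (k+1) * u j := by
      have : ∀ q, (pathCount src rng (fun _ => True) (k+1) q j : ℝ) = ((B ^ (k+1)) j q : ℝ) := by
        intro q; rw [pathCount_true_eq src rng B hcard (k+1) q j]
      simp only [this]
      exact eigen_pow B u r hu (k+1) j
    have hlow : umin ≤ ∑ q, u q * (pathCount src rng (fun _ => True) k (rng (D q)) j : ℝ) := by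
      have q0 : V := Classical.arbitrary V
      calc umin ≤ u q0 * (pathCount src rng (fun _ => True) k (rng (D q0)) j : ℝ) := by
            nlinarith [humin q0, hone (rng (D q0)), hupos q0, huminpos]
        _ ≤ _ := Finset.single_le_sum (f := fun q =>
              u q * (pathCount src rng (fun _ => True) k (rng (D q)) j : ℝ))
            (fun q _ => mul_nonneg (hupos q).le (Nat.cast_nonneg _)) (Finset.mem_univ q0)
    have final : r ^ (k+1) * u j - umin ≤ c * (r ^ (k+1) * u j) := by
      rw [c_def, sub_mul, one_mul]
      have hdiv : umin / (r ^ (k+1) * umax) * (r ^ (k+1) * u j) ≤ umin := by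
        rw [div_mul_eq_mul_div, div_le_iff₀ (by positivity)]
        nlinarith [mul_le_mul_of_nonneg_left (humax j)
          (mul_nonneg huminpos.le (hrpow (k+1)).le)]
      linarith
    linarith
  -- iterated estimate
  have growth : ∀ (m : ℕ) (j : V),
      ∑ i, u i * (pathCount src rng good (m * (k+1)) i j : ℝ)
        ≤ c ^ m * r ^ (m * (k+1)) * u j := by
    intro m
    induction m with
    | zero =>
        intro j
        simp only [Nat.zero_mul, pathCount, pow_zero, one_mul]
        rw [Finset.sum_eq_single j]
        · simp
        · intro b _ hb; simp [hb]
        · simp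
    | succ m ih =>
        intro j
        have hsplit : (m + 1) * (k+1) = m * (k+1) + (k+1) := by ring
        rw [hsplit]
        have expand : ∀ i, (pathCount src rng good (m * (k+1) + (k+1)) i j : ℝ)
            = ∑ q, (pathCount src rng good (m * (k+1)) i q : ℝ)
                * (pathCount src rng good (k+1) q j : ℝ) := by
          intro i
          rw [pathCount_concat]
          push_cast
          rfl
        calc ∑ i, u i * (pathCount src rng good (m * (k+1) + (k+1)) i j : ℝ)
            = ∑ q, (∑ i, u i * (pathCount src rng good (m * (k+1)) i q : ℝ))
                * (pathCount src rng good (k+1) q j : ℝ) := by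
              simp only [expand, Finset.mul_sum, Finset.sum_mul]
              rw [Finset.sum_comm]
              exact Finset.sum_congr rfl fun q _ => Finset.sum_congr rfl fun i _ => by ring
          _ ≤ ∑ q, (c ^ m * r ^ (m * (k+1)) * u q)
                * (pathCount src rng good (k+1) q j : ℝ) := by
              refine Finset.sum_le_sum fun q _ => ?_
              exact mul_le_mul_of_nonneg_right (ih q) (Nat.cast_nonneg _)
          _ = c ^ m * r ^ (m * (k+1))
                * ∑ q, u q * (pathCount src rng good (k+1) q j : ℝ) := by
              rw [Finset.mul_sum]
              exact Finset.sum_congr rfl fun q _ => by ring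
          _ ≤ c ^ m * r ^ (m * (k+1)) * (c * (r ^ (k+1) * u j)) := by
              refine mul_le_mul_of_nonneg_left (key j) (by positivity)
          _ = c ^ (m+1) * r ^ (m * (k+1) + (k+1)) * u j := by
              rw [pow_succ, pow_add]
              ring
  -- the set avoiding distinguished edges on all negative coordinates
  set A0 : Set {x : ℤ → E // ∀ n, src (x (n + 1)) = rng (x n)} :=
    {x | ∀ z : ℤ, z < 0 → ¬∃ Q : V, x.1 z = D Q} with A0_def
  -- cylinder bound
  have cylbound : ∀ n : ℕ, ν A0 ≤ ENNReal.ofReal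
      ((∑ i, ∑ j, u i * (pathCount src rng good (n+1) i j : ℝ) * v j) / r ^ (n+1)) := by
    intro n
    set W : Finset (Fin (n+1) → E) := Finset.univ.filter
      (fun w => (∀ i : Fin n, src (w i.succ) = rng (w i.castSucc)) ∧ ∀ i, good (w i))
      with W_def
    have hsubset : A0 ⊆ ⋃ w ∈ W, {x : {x : ℤ → E // ∀ n, src (x (n + 1)) = rng (x n)} |
        ∀ i : Fin (n + 1), x.1 (-(n+1 : ℤ) + (i.val : ℤ)) = w i} := by
      intro x hx
      refine Set.mem_iUnion₂.2
        ⟨fun i : Fin (n+1) => x.1 (-(n+1 : ℤ) + (i.val : ℤ)), ?_, ?_⟩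
      · rw [W_def, Finset.mem_filter]
        refine ⟨Finset.mem_univ _, fun i => ?_, fun i => ?_⟩
        · beta_reduce
          have h2 := x.2 (-(n+1 : ℤ) + (i.val : ℤ))
          have e1 : (-(n+1 : ℤ) + ((i.succ : Fin (n+1)).val : ℤ))
              = -(n+1 : ℤ) + (i.val : ℤ) + 1 := by
            simp [Fin.val_succ]; ring
          have e2 : (-(n+1 : ℤ) + ((i.castSucc : Fin (n+1)).val : ℤ))
              = -(n+1 : ℤ) + (i.val : ℤ) := by simp
          rw [e1, e2]
          exact h2
        · intro Q hQ
          have hneg : (-(n+1 : ℤ) + (i.val : ℤ)) < 0 := by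
            have := i.isLt
            omega
          exact hx _ hneg ⟨Q, hQ⟩
      · intro i; rfl
    calc ν A0 ≤ ∑ w ∈ W, ν {x : {x : ℤ → E // ∀ n, src (x (n + 1)) = rng (x n)} |
            ∀ i : Fin (n + 1), x.1 (-(n+1 : ℤ) + (i.val : ℤ)) = w i} :=
          le_trans (measure_mono hsubset) (measure_biUnion_finset_le W _)
      _ = ∑ w ∈ W, ENNReal.ofReal
            (u (src (w 0)) * v (rng (w (Fin.last n))) / r ^ (n+1)) := by
          refine Finset.sum_congr rfl fun w hw => ?_
          rw [W_def, Finset.mem_filter] at hw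
          exact hcyl (-(n+1 : ℤ)) n w hw.2.1
      _ = ENNReal.ofReal (∑ w ∈ W,
            u (src (w 0)) * v (rng (w (Fin.last n))) / r ^ (n+1)) := by
          rw [ENNReal.ofReal_sum_of_nonneg]
          intro w _
          have := hupos (src (w 0)); have := hvpos (rng (w (Fin.last n)))
          positivity
      _ = ENNReal.ofReal
          ((∑ i, ∑ j, u i * (pathCount src rng good (n+1) i j : ℝ) * v j) / r ^ (n+1)) := by
          rw [← Finset.sum_div, W_def, Finset.sum_filter, bridge src rng good n u v]
  -- combine: quantitative bound on ν A0
  have bound : ∀ m : ℕ, ν A0 ≤ ENNReal.ofReal (c ^ (m+1)) := by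
    intro m
    have hn : (m + 1) * (k+1) = (m * (k+1) + k) + 1 := by ring
    refine (cylbound (m * (k+1) + k)).trans (ENNReal.ofReal_le_ofReal ?_)
    rw [div_le_iff₀ (hrpow _)]
    calc ∑ i, ∑ j, u i * (pathCount src rng good (m * (k+1) + k + 1) i j : ℝ) * v j
        = ∑ j, (∑ i, u i * (pathCount src rng good ((m+1) * (k+1)) i j : ℝ)) * v j := by
          rw [Finset.sum_comm]
          refine Finset.sum_congr rfl fun j _ => ?_
          rw [Finset.sum_mul, ← hn]
      _ ≤ ∑ j, (c ^ (m+1) * r ^ ((m+1) * (k+1)) * u j) * v j := by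
          refine Finset.sum_le_sum fun j _ => ?_
          exact mul_le_mul_of_nonneg_right (growth (m+1) j) (hvpos j).le
      _ = c ^ (m+1) * r ^ ((m+1) * (k+1)) * ∑ j, u j * v j := by
          rw [Finset.mul_sum]
          exact Finset.sum_congr rfl fun j _ => by ring
      _ = c ^ (m+1) * r ^ (m * (k+1) + k + 1) := by
          rw [hnorm, mul_one, hn]
  -- ν A0 = 0
  have hA0 : ν A0 = 0 := by
    have h1 : Filter.Tendsto (fun m : ℕ => c ^ (m+1)) Filter.atTop (nhds 0) :=
      (tendsto_pow_atTop_nhds_zero_of_lt_one hcnonneg hclt).comp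
        (Filter.tendsto_add_atTop_nat 1)
    have h2 : Filter.Tendsto (fun m : ℕ => ENNReal.ofReal (c ^ (m+1)))
        Filter.atTop (nhds 0) := by
      simpa using ENNReal.tendsto_ofReal h1
    exact le_antisymm (ge_of_tendsto' h2 bound) zero_le
  -- shift invariance
  set Aset : ℤ → Set {x : ℤ → E // ∀ n, src (x (n + 1)) = rng (x n)} :=
    fun t => {x | ∀ z : ℤ, z < t → ¬∃ Q : V, x.1 z = D Q} with Aset_def
  have meas : ∀ t : ℤ, MeasurableSet (Aset t) := by
    intro t
    have hrw : Aset t = ⋂ z : ℤ, {x : {x : ℤ → E // ∀ n, src (x (n + 1)) = rng (x n)} |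
        z < t → ¬∃ Q : V, x.1 z = D Q} := by
      ext x; simp [Aset_def, Set.mem_iInter]
    rw [hrw]
    refine MeasurableSet.iInter fun z => ?_
    by_cases hz : z < t
    · have : {x : {x : ℤ → E // ∀ n, src (x (n + 1)) = rng (x n)} |
          z < t → ¬∃ Q : V, x.1 z = D Q}
          = (fun x : {x : ℤ → E // ∀ n, src (x (n + 1)) = rng (x n)} => x.1 z) ⁻¹'
            {e : E | ¬∃ Q : V, e = D Q} := by
        ext x; simp [hz]
      rw [this]
      exact ((measurable_pi_apply z).comp measurable_subtype_coe)
        (Set.toFinite _).measurableSet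
    · have : {x : {x : ℤ → E // ∀ n, src (x (n + 1)) = rng (x n)} |
          z < t → ¬∃ Q : V, x.1 z = D Q} = Set.univ := by
        ext x; simp [hz]
      rw [this]
      exact MeasurableSet.univ
  have hshift : ∀ t : ℤ, ν (Aset (t+1)) = ν (Aset t) := by
    intro t
    have h := hinv (Aset t) (meas t)
    have hpre : (fun x : {x : ℤ → E // ∀ n, src (x (n + 1)) = rng (x n)} =>
        (⟨fun n => x.1 (n + 1), fun n => x.2 (n + 1)⟩ :
          {x : ℤ → E // ∀ n, src (x (n + 1)) = rng (x n)})) ⁻¹' (Aset t)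
        = Aset (t+1) := by
      ext x
      simp only [Set.mem_preimage, Aset_def, Set.mem_setOf_eq]
      constructor
      · intro hh z hz
        have := hh (z - 1) (by omega)
        simpa [sub_add_cancel] using this
      · intro hh z hz
        exact hh (z + 1) (by omega)
    rw [hpre] at h
    exact h
  have hAm : ∀ m : ℕ, ν (Aset (-(m:ℤ))) = 0 := by
    intro m
    induction m with
    | zero =>
        have : Aset (-(0:ℕ):ℤ) = A0 := by
          ext x; simp [Aset_def, A0_def]
        rw [this]; exact hA0
    | succ m ih =>
        have h := hshift (-((m:ℤ)+1))
        have e : (-((m:ℤ)+1) + 1) = -(m:ℤ) := by ring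
        rw [e] at h
        have e2 : (-((m+1:ℕ):ℤ)) = -((m:ℤ)+1) := by push_cast; ring
        rw [e2, ← h, ih]
  -- finish
  have hsub2 : {x : {x : ℤ → E // ∀ n, src (x (n + 1)) = rng (x n)} |
      {n : ℤ | n < 0 ∧ ∃ Q : V, x.1 n = D Q}.Finite} ⊆ ⋃ m : ℕ, Aset (-(m:ℤ)) := by
    intro x hx
    obtain ⟨b, hb⟩ := hx.bddBelow
    refine Set.mem_iUnion.2 ⟨b.natAbs, ?_⟩
    intro z hz hex
    obtain ⟨Q, hQ⟩ := hex
    have hz0 : z < 0 := by omega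
    have hmem : z ∈ {n : ℤ | n < 0 ∧ ∃ Q : V, x.1 n = D Q} := ⟨hz0, Q, hQ⟩
    have := hb hmem
    omega
  refine le_antisymm ?_ zero_le
  calc ν {x : {x : ℤ → E // ∀ n, src (x (n + 1)) = rng (x n)} |
        {n : ℤ | n < 0 ∧ ∃ Q : V, x.1 n = D Q}.Finite}
      ≤ ν (⋃ m : ℕ, Aset (-(m:ℤ))) := measure_mono hsub2
    _ ≤ ∑' m : ℕ, ν (Aset (-(m:ℤ))) := measure_iUnion_le _
    _ = 0 := by simp [hAm]
end

section
/- Let σ be an admissible substitution (matrix [[A,C],[0,B]], A, B primitive, ρ(A) > ρ(B) > 1) with tiling length |w|_𝒯 = ⟨ℓ̄(w), ξ⟩ for the normalized left PF eigenvector ξ. Then for every x in the substitution space X_σ, lim_{n→∞} |x[1,n]|_𝒯 / n = 1. -/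
open Filter Matrix
namespace TilingAux

variable {α β : Type*}

lemma drop_flatten (l : List (List α)) (i : ℕ) :
    ∃ (e : List α) (m : List (List α)), (l.flatten).drop i = e ++ m.flatten ∧
      m <:+ l ∧ (e = [] ∨ ∃ a ∈ l, e <:+ a) := by
  induction l generalizing i with
  | nil => exact ⟨[], [], by simp, by simp, Or.inl rfl⟩
  | cons a l ih =>
    rcases lt_or_ge i a.length with h | h
    · refine ⟨a.drop i, l, ?_, List.suffix_cons a l, Or.inr ⟨a, by simp, List.drop_suffix i a⟩⟩
      rw [List.flatten_cons, List.drop_append, Nat.sub_eq_zero_of_le h.le,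
        List.drop_zero]
    · obtain ⟨e, m, heq, hm, he⟩ := ih (i - a.length)
      refine ⟨e, m, ?_, hm.trans (List.suffix_cons a l), ?_⟩
      · rw [List.flatten_cons, List.drop_append, List.drop_eq_nil_of_le h,
          List.nil_append, heq]
      · rcases he with h' | ⟨b, hb, hbe⟩
        · exact Or.inl h'
        · exact Or.inr ⟨b, List.mem_cons_of_mem _ hb, hbe⟩

lemma take_flatten (l : List (List α)) (i : ℕ) :
    ∃ (m : List (List α)) (f : List α), (l.flatten).take i = m.flatten ++ f ∧
      m <+: l ∧ (f = [] ∨ ∃ a ∈ l, f <+: a) := by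
  induction l generalizing i with
  | nil => exact ⟨[], [], by simp, by simp, Or.inl rfl⟩
  | cons a l ih =>
    rcases le_or_gt i a.length with h | h
    · refine ⟨[], a.take i, ?_, by simp, Or.inr ⟨a, by simp, List.take_prefix i a⟩⟩
      rw [List.flatten_cons, List.take_append, Nat.sub_eq_zero_of_le h,
        List.take_zero, List.append_nil, List.flatten_nil, List.nil_append]
    · obtain ⟨m, f, heq, hm, hf⟩ := ih (i - a.length)
      refine ⟨a :: m, f, ?_, List.cons_prefix_cons.mpr ⟨rfl, hm⟩, ?_⟩
      · rw [List.flatten_cons, List.take_append, List.take_of_length_le h.le,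
          heq, List.flatten_cons, List.append_assoc]
      · rcases hf with h' | ⟨b, hb, hbf⟩
        · exact Or.inl h'
        · exact Or.inr ⟨b, List.mem_cons_of_mem _ hb, hbf⟩

lemma infix_flatten (l : List (List α)) (w : List α) (hw : w <:+: l.flatten) (Lb : ℕ)
    (hL : ∀ a ∈ l, a.length ≤ Lb) :
    ∃ e m f, w = e ++ m.flatten ++ f ∧ m <:+: l ∧ e.length ≤ Lb ∧ f.length ≤ Lb := by
  obtain ⟨s, t, hst⟩ := hw
  have hdrop : (l.flatten).drop s.length = w ++ t := by
    rw [← hst, List.append_assoc, List.drop_left]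
  have hw' : w = ((l.flatten).drop s.length).take w.length := by
    rw [hdrop, List.take_left]
  obtain ⟨e, m, heq, hm, he⟩ := drop_flatten l s.length
  have helen : e.length ≤ Lb := by
    rcases he with rfl | ⟨a, ha, hea⟩
    · simp
    · exact hea.length_le.trans (hL a ha)
  rw [heq] at hw'
  rcases le_or_gt w.length e.length with h | h
  · refine ⟨w, [], [], by simp, ⟨l, [], by simp⟩, ?_, by simp⟩
    rw [hw', List.take_append, Nat.sub_eq_zero_of_le h, List.take_zero,
      List.append_nil]
    exact le_trans (by simp [Nat.min_le_left, List.length_take]) helen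
  · obtain ⟨m', f, heq', hm', hf⟩ := take_flatten m (w.length - e.length)
    refine ⟨e, m', f, ?_, (hm'.isInfix).trans hm.isInfix, helen, ?_⟩
    · rw [hw', List.take_append, List.take_of_length_le h.le, heq',
        List.append_assoc]
    · rcases hf with rfl | ⟨a, ha, hfa⟩
      · simp
      · exact hfa.length_le.trans (hL a (hm.subset ha))

lemma infix_map {f : α → β} {m : List β} {z : List α} (h : m <:+: z.map f) :
    ∃ u, u <:+: z ∧ m = u.map f := by
  obtain ⟨s, t, hst⟩ := h
  rw [List.append_assoc] at hst
  obtain ⟨z₁, z₂, rfl, hz₁, hz₂⟩ := List.map_eq_append_iff.mp hst.symm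
  obtain ⟨z₃, z₄, rfl, hz₃, hz₄⟩ := List.map_eq_append_iff.mp hz₂
  exact ⟨z₃, ⟨z₁, z₄, by simp⟩, hz₃.symm⟩

lemma sumLawfulBEq {κ κ' : Type*} [BEq κ] [BEq κ'] [LawfulBEq κ] [LawfulBEq κ'] :
    LawfulBEq (κ ⊕ κ') := by
  refine @LawfulBEq.mk _ _ ⟨?_⟩ ?_
  rotate_left
  · intro a b h
    cases a with
    | inl v => cases b with
      | inl w => exact congrArg Sum.inl (eq_of_beq h)
      | inr w => exact Bool.noConfusion h
    | inr v => cases b with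
      | inl w => exact Bool.noConfusion h
      | inr w => exact congrArg Sum.inr (eq_of_beq h)
  · intro a
    cases a with
    | inl v => exact ((ReflBEq.rfl : (v == v) = true))
    | inr v => exact ((ReflBEq.rfl : (v == v) = true))

end TilingAux
set_option maxHeartbeats 2000000 in
/-- For an admissible substitution `σ` on `κ ⊕ κ'` (matrix `[[A,C],[0,B]]`, `A`, `B`
primitive, `ρ(A) = r > ρ(B) > 1`) with tiling length `|w|_𝒯 = ⟨ℓ̄(w), ξ⟩` for the
normalized left PF eigenvector `ξ` (so that `|σ^k(a)| / r^k → ξ_a`), every point `x`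
of the substitution space satisfies `|x[1,n]|_𝒯 / n → 1` as `n → ∞`. -/
theorem tiling_length_of_prefix_asymptotics
    {κ κ' : Type*} [Fintype κ] [Fintype κ'] [DecidableEq κ] [DecidableEq κ']
    [Nonempty κ] [Nonempty κ']
    (σ : (κ ⊕ κ') → List (κ ⊕ κ')) (hσ : ∀ a, σ a ≠ [])
    (M : Matrix (κ ⊕ κ') (κ ⊕ κ') ℝ)
    (hM : ∀ i j, M i j = ((σ j).count i : ℝ))
    (hblock : ∀ (b : κ') (a : κ), M (Sum.inr b) (Sum.inl a) = 0)
    (hAprim : ∃ k : ℕ, 0 < k ∧ ∀ i j, 0 < ((M.submatrix Sum.inl Sum.inl) ^ k) i j)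
    (hBprim : ∃ k : ℕ, 0 < k ∧ ∀ i j, 0 < ((M.submatrix Sum.inr Sum.inr) ^ k) i j)
    (r : ℝ) (hr : 1 < r)
    (hrA : (r : ℂ) ∈ spectrum ℂ ((M.submatrix Sum.inl Sum.inl).map Complex.ofReal))
    (hrmax : ∀ z ∈ spectrum ℂ (M.map Complex.ofReal), ‖z‖ ≤ r)
    (hBlt : ∀ z ∈ spectrum ℂ ((M.submatrix Sum.inr Sum.inr).map Complex.ofReal),
      ‖z‖ < r)
    (hBgt : ∃ z ∈ spectrum ℂ ((M.submatrix Sum.inr Sum.inr).map Complex.ofReal),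
      1 < ‖z‖)
    (ξ : (κ ⊕ κ') → ℝ) (hξpos : ∀ i, 0 < ξ i)
    (heig : Matrix.vecMul ξ M = r • ξ)
    (hnorm : ∀ a, Tendsto
      (fun k : ℕ => (((fun l => (l.map σ).flatten)^[k] [a]).length : ℝ) / r ^ k)
      atTop (nhds (ξ a)))
    (x : ℤ → (κ ⊕ κ'))
    (hx : ∀ (p : ℤ) (n : ℕ), ∃ (a : κ ⊕ κ') (N : ℕ), 1 ≤ N ∧
      (List.ofFn fun i : Fin n => x (p + (i.val : ℤ))) <:+:
        (fun l => (l.map σ).flatten)^[N] [a]) :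
    Tendsto (fun n : ℕ =>
        (∑ i, (((List.ofFn fun j : Fin n => x (1 + (j.val : ℤ))).count i : ℝ) * ξ i)) /
          (n : ℝ))
      atTop (nhds 1) := by
  have hne : Nonempty (κ ⊕ κ') := ⟨Sum.inl (Classical.arbitrary κ)⟩
  haveI : LawfulBEq (κ ⊕ κ') := TilingAux.sumLawfulBEq
  set Sf : List (κ ⊕ κ') → List (κ ⊕ κ') := fun l => (l.map σ).flatten with hSfdef
  set T : List (κ ⊕ κ') → ℝ := fun w => ∑ i, (w.count i : ℝ) * ξ i with hTdef
  set L : ℕ := Finset.univ.sup fun b : κ ⊕ κ' => (σ b).length with hLdef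
  have hLb : ∀ b, (σ b).length ≤ L := fun b => Finset.le_sup (f := fun b : κ ⊕ κ' => (σ b).length) (Finset.mem_univ b)
  have rpos : (0:ℝ) < r := lt_trans one_pos hr
  have rkpos : ∀ k : ℕ, (0:ℝ) < r ^ k := fun k => pow_pos rpos k
  -- basic structural facts
  have hSapp : ∀ u v, Sf (u ++ v) = Sf u ++ Sf v := by
    intro u v; simp [hSfdef]
  have hSkapp : ∀ (k : ℕ) u v, Sf^[k] (u ++ v) = Sf^[k] u ++ Sf^[k] v := by
    intro k
    induction k with
    | zero => simp
    | succ k ih =>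
      intro u v
      rw [Function.iterate_succ_apply, Function.iterate_succ_apply,
        Function.iterate_succ_apply, hSapp, ih]
  have hSknil : ∀ k : ℕ, Sf^[k] ([] : List (κ ⊕ κ')) = [] := by
    intro k
    induction k with
    | zero => rfl
    | succ k ih => rw [Function.iterate_succ_apply, show Sf [] = [] from rfl, ih]
  have hTapp : ∀ u v, T (u ++ v) = T u + T v := by
    intro u v
    simp only [hTdef, List.count_append, Nat.cast_add, add_mul]
    rw [Finset.sum_add_distrib]
  have hTsingle : ∀ b, T [b] = ξ b := by
    intro b
    have h1 : ∀ i : κ ⊕ κ', (List.count i [b] : ℝ) * ξ i = if i = b then ξ b else 0 := by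
      intro i
      by_cases h : i = b
      · subst h; simp
      · have hc : List.count i [b] = 0 := by
          rw [List.count_eq_zero]; simp [h]
        simp [h, hc]
    rw [hTdef]
    simp only [h1]
    simp
  have hTcons : ∀ b w, T (b :: w) = ξ b + T w := by
    intro b w
    have : b :: w = [b] ++ w := rfl
    rw [this, hTapp, hTsingle]
  have hTσ : ∀ b, T (σ b) = r * ξ b := by
    intro b
    have h1 : Matrix.vecMul ξ M b = r * ξ b := by rw [heig]; simp
    rw [← h1]
    simp only [hTdef, Matrix.vecMul, dotProduct, hM]
    exact Finset.sum_congr rfl fun i _ => by ring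
  have hTS : ∀ u, T (Sf u) = r * T u := by
    intro u
    induction u with
    | nil => simp [hTdef, hSfdef]
    | cons b u ih =>
      have : Sf (b :: u) = σ b ++ Sf u := by simp [hSfdef]
      rw [this, hTapp, hTσ, ih, hTcons, mul_add]
  set len : ℕ → (κ ⊕ κ') → ℝ := fun k b => ((Sf^[k] [b]).length : ℝ) with hlendef
  have huniv : (Finset.univ : Finset (κ ⊕ κ')).Nonempty := Finset.univ_nonempty
  set E : ℕ → ℝ := fun k => Finset.univ.sup' huniv (fun b => |len k b / r ^ k - ξ b|)
    with hEdef
  have hEnn : ∀ k, 0 ≤ E k := by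
    intro k
    obtain ⟨b⟩ := hne
    exact le_trans (abs_nonneg _) (Finset.le_sup' (fun b => |len k b / r ^ k - ξ b|) (Finset.mem_univ b))
  have hEb : ∀ k b, |len k b - r ^ k * ξ b| ≤ r ^ k * E k := by
    intro k b
    have h1 : |len k b / r ^ k - ξ b| ≤ E k := Finset.le_sup' (fun b => |len k b / r ^ k - ξ b|) (Finset.mem_univ b)
    have h2 : len k b - r ^ k * ξ b = r ^ k * (len k b / r ^ k - ξ b) := by
      field_simp
    rw [h2, abs_mul, abs_of_pos (rkpos k)]
    exact mul_le_mul_of_nonneg_left h1 (rkpos k).le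
  have hE0 : Tendsto E atTop (nhds 0) := by
    rw [Metric.tendsto_atTop]
    intro ε hε
    have h : ∀ᶠ k in atTop, ∀ b : κ ⊕ κ', |len k b / r ^ k - ξ b| < ε := by
      rw [eventually_all]
      intro b
      have := Metric.tendsto_atTop.mp (hnorm b) ε hε
      obtain ⟨N, hN⟩ := this
      filter_upwards [eventually_ge_atTop N] with k hk
      have := hN k hk
      rwa [Real.dist_eq] at this
    obtain ⟨N, hN⟩ := eventually_atTop.mp h
    refine ⟨N, fun k hk => ?_⟩
    rw [Real.dist_eq, sub_zero, abs_of_nonneg (hEnn k), hEdef]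
    exact (Finset.sup'_lt_iff huniv).mpr fun b _ => hN k hk b
  set ξm : ℝ := Finset.univ.inf' huniv ξ with hxmdef
  have hξm : 0 < ξm := by
    rw [hxmdef, Finset.lt_inf'_iff]
    exact fun i _ => hξpos i
  have hcountsum : ∀ w : List (κ ⊕ κ'), ∑ i, (List.count i w) = w.length := by
    intro w
    induction w with
    | nil => simp
    | cons b w ih =>
      have h1 : ∀ i : κ ⊕ κ', List.count i (b :: w) = List.count i w + if i = b then 1 else 0 := by
        intro i
        rw [List.count_cons]
        by_cases h : i = b
        · subst h; simp
        · simp [beq_iff_eq, h, Ne.symm h]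
      rw [Finset.sum_congr rfl fun i _ => h1 i, Finset.sum_add_distrib, ih]
      simp
  have hTlow : ∀ w : List (κ ⊕ κ'), ξm * w.length ≤ T w := by
    intro w
    have h1 : ξm * w.length = ∑ i, (List.count i w : ℝ) * ξm := by
      rw [← Finset.sum_mul, mul_comm]
      congr 1
      rw [← hcountsum w]
      push_cast
      rfl
    rw [h1, hTdef]
    refine Finset.sum_le_sum fun i _ => ?_
    exact mul_le_mul_of_nonneg_left (Finset.inf'_le _ (Finset.mem_univ i)) (Nat.cast_nonneg _)
  have hLB : ∀ (j : ℕ) (w : List (κ ⊕ κ')),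
      |((Sf^[j] w).length : ℝ) - r ^ j * T w| ≤ w.length * (r ^ j * E j) := by
    intro j w
    induction w with
    | nil =>
      rw [hSknil j]
      simp [hTdef]
    | cons b w ih =>
      have hsplit : Sf^[j] (b :: w) = Sf^[j] [b] ++ Sf^[j] w := by
        rw [show (b :: w) = [b] ++ w from rfl, hSkapp]
      have hlen : ((Sf^[j] (b :: w)).length : ℝ) = len j b + ((Sf^[j] w).length : ℝ) := by
        rw [hsplit, List.length_append]
        push_cast
        rfl
      have key : ((Sf^[j] (b :: w)).length : ℝ) - r ^ j * T (b :: w)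
          = (len j b - r ^ j * ξ b) + (((Sf^[j] w).length : ℝ) - r ^ j * T w) := by
        rw [hlen, hTcons]
        ring
      rw [key]
      calc |(len j b - r ^ j * ξ b) + (((Sf^[j] w).length : ℝ) - r ^ j * T w)|
          ≤ |len j b - r ^ j * ξ b| + |((Sf^[j] w).length : ℝ) - r ^ j * T w| := abs_add_le _ _
        _ ≤ r ^ j * E j + w.length * (r ^ j * E j) := add_le_add (hEb j b) ih
        _ = (w.length + 1) * (r ^ j * E j) := by ring
        _ = ((b :: w).length : ℝ) * (r ^ j * E j) := by
            rw [List.length_cons]; push_cast; ring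
  have hMAIN : ∀ (k : ℕ) (u w : List (κ ⊕ κ')), w <:+: Sf^[k] u →
      ∃ v, v <:+: u ∧ ∀ j : ℕ,
        |((Sf^[j] w).length : ℝ) - r ^ j * T w| ≤
          (∑ i ∈ Finset.range k, 2 * L * (r ^ (j + i) * E (j + i))) +
            v.length * (r ^ (j + k) * E (j + k)) ∧
          (Sf^[j + k] v).length ≤ (Sf^[j] w).length := by
    intro k
    induction k with
    | zero =>
      intro u w hw
      refine ⟨w, by simpa using hw, fun j => ?_⟩
      refine ⟨?_, by simp⟩
      simpa using hLB j w
    | succ k ih =>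
      intro u w hw
      rw [Function.iterate_succ_apply'] at hw
      have hwf : w <:+: ((Sf^[k] u).map σ).flatten := hw
      obtain ⟨e, m, f, hwdecomp, hm, he, hf⟩ :=
        TilingAux.infix_flatten ((Sf^[k] u).map σ) w hwf L
          (by
            intro a ha
            obtain ⟨b, _, rfl⟩ := List.mem_map.mp ha
            exact hLb b)
      obtain ⟨u', hu', rfl⟩ := TilingAux.infix_map hm
      have hwd : w = e ++ Sf u' ++ f := hwdecomp
      obtain ⟨v, hvu, hbound⟩ := ih u u' hu'
      refine ⟨v, hvu, fun j => ?_⟩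
      have hseq : Sf^[j] w = Sf^[j] e ++ Sf^[j + 1] u' ++ Sf^[j] f := by
        rw [hwd, hSkapp, hSkapp, ← Function.iterate_succ_apply]
      have hTw : T w = T e + r * T u' + T f := by
        rw [hwd, hTapp, hTapp, hTS]
      have hEnnr : ∀ i : ℕ, (0:ℝ) ≤ r ^ i * E i := fun i =>
        mul_nonneg (rkpos i).le (hEnn i)
      constructor
      · have h1 := hLB j e
        have h2 := hLB j f
        have h3 := (hbound (j + 1)).1
        have key : ((Sf^[j] w).length : ℝ) - r ^ j * T w
            = (((Sf^[j] e).length : ℝ) - r ^ j * T e)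
              + (((Sf^[j + 1] u').length : ℝ) - r ^ (j + 1) * T u')
              + (((Sf^[j] f).length : ℝ) - r ^ j * T f) := by
          rw [hseq, hTw]
          push_cast [List.length_append]
          ring
        rw [key]
        have habs : |(((Sf^[j] e).length : ℝ) - r ^ j * T e)
              + (((Sf^[j + 1] u').length : ℝ) - r ^ (j + 1) * T u')
              + (((Sf^[j] f).length : ℝ) - r ^ j * T f)|
            ≤ |((Sf^[j] e).length : ℝ) - r ^ j * T e|
              + |((Sf^[j + 1] u').length : ℝ) - r ^ (j + 1) * T u'|
              + |((Sf^[j] f).length : ℝ) - r ^ j * T f| :=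
          le_trans (abs_add_le _ _) (add_le_add_left (abs_add_le _ _) _)
        have hel : (e.length : ℝ) * (r ^ j * E j) ≤ L * (r ^ j * E j) :=
          mul_le_mul_of_nonneg_right (by exact_mod_cast he) (hEnnr j)
        have hfl : (f.length : ℝ) * (r ^ j * E j) ≤ L * (r ^ j * E j) :=
          mul_le_mul_of_nonneg_right (by exact_mod_cast hf) (hEnnr j)
        have hsum : (∑ i ∈ Finset.range (k + 1), 2 * L * (r ^ (j + i) * E (j + i)))
            = (∑ i ∈ Finset.range k, 2 * L * (r ^ ((j + 1) + i) * E ((j + 1) + i)))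
              + 2 * L * (r ^ j * E j) := by
          rw [Finset.sum_range_succ']
          have hcg : ∀ i ∈ Finset.range k,
              2 * (L:ℝ) * (r ^ (j + (i + 1)) * E (j + (i + 1)))
                = 2 * L * (r ^ ((j + 1) + i) * E ((j + 1) + i)) := fun i _ => by
            rw [show j + (i + 1) = (j + 1) + i by omega]
          rw [Finset.sum_congr rfl hcg]
          norm_num
        calc |(((Sf^[j] e).length : ℝ) - r ^ j * T e)
              + (((Sf^[j + 1] u').length : ℝ) - r ^ (j + 1) * T u')
              + (((Sf^[j] f).length : ℝ) - r ^ j * T f)|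
            ≤ |((Sf^[j] e).length : ℝ) - r ^ j * T e|
              + |((Sf^[j + 1] u').length : ℝ) - r ^ (j + 1) * T u'|
              + |((Sf^[j] f).length : ℝ) - r ^ j * T f| := habs
          _ ≤ (e.length : ℝ) * (r ^ j * E j)
              + ((∑ i ∈ Finset.range k, 2 * L * (r ^ ((j + 1) + i) * E ((j + 1) + i)))
                + v.length * (r ^ ((j + 1) + k) * E ((j + 1) + k)))
              + (f.length : ℝ) * (r ^ j * E j) := add_le_add (add_le_add h1 h3) h2
          _ ≤ (∑ i ∈ Finset.range (k + 1), 2 * L * (r ^ (j + i) * E (j + i)))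
              + v.length * (r ^ (j + (k + 1)) * E (j + (k + 1))) := by
              rw [hsum, show (j + 1) + k = j + (k + 1) by omega]
              have := add_le_add hel hfl
              nlinarith [hEnnr j]
      · have h4 := (hbound (j + 1)).2
        rw [show j + (k + 1) = (j + 1) + k by omega]
        refine le_trans h4 ?_
        rw [hseq]
        simp [List.length_append]
        try omega
  have hflat : ∀ u : List (κ ⊕ κ'), (Sf u).length ≤ L * u.length := by
    intro u
    induction u with
    | nil => simp [hSfdef]
    | cons b u ih =>
      have hsp : Sf (b :: u) = σ b ++ Sf u := by simp [hSfdef]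
      rw [hsp, List.length_append, List.length_cons]
      calc (σ b).length + (Sf u).length ≤ L + L * u.length := add_le_add (hLb b) ih
        _ = L * (u.length + 1) := by ring
  have hgrow : ∀ (N : ℕ) (u : List (κ ⊕ κ')), (Sf^[N] u).length ≤ L ^ N * u.length := by
    intro N
    induction N with
    | zero => intro u; simp
    | succ N ih =>
      intro u
      rw [Function.iterate_succ_apply]
      calc (Sf^[N] (Sf u)).length ≤ L ^ N * (Sf u).length := ih (Sf u)
        _ ≤ L ^ N * (L * u.length) := Nat.mul_le_mul_left _ (hflat u)
        _ = L ^ (N + 1) * u.length := by ring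
  have hL1 : 1 ≤ L := by
    obtain ⟨b⟩ := hne
    have h1 := hLb b
    have h2 : 0 < (σ b).length := List.length_pos_iff.mpr (hσ b)
    omega
  have hL2 : 2 ≤ L := by
    by_contra hcon
    push_neg at hcon
    obtain ⟨b⟩ := hne
    have hb : ∀ k : ℕ, ((Sf^[k] [b]).length : ℝ) ≤ 1 := by
      intro k
      have h1 := hgrow k [b]
      have h2 : L ^ k ≤ 1 ^ k := Nat.pow_le_pow_left (by omega) k
      have h3 : (Sf^[k] [b]).length ≤ 1 := by
        simpa using le_trans h1 (by simpa using h2)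
      exact_mod_cast h3
    have hrinv : (0:ℝ) ≤ r⁻¹ := by positivity
    have hrinv1 : r⁻¹ < 1 := inv_lt_one_of_one_lt₀ hr
    have h0 : Tendsto (fun k : ℕ => ((Sf^[k] [b]).length : ℝ) / r ^ k) atTop (nhds 0) := by
      apply squeeze_zero (fun k => by positivity) (g := fun k => r⁻¹ ^ k)
      · intro k
        rw [inv_pow, div_eq_mul_inv]
        calc ((Sf^[k] [b]).length : ℝ) * (r ^ k)⁻¹ ≤ 1 * (r ^ k)⁻¹ :=
              mul_le_mul_of_nonneg_right (hb k) (by positivity)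
          _ = (r ^ k)⁻¹ := one_mul _
      · exact tendsto_pow_atTop_nhds_zero_of_lt_one hrinv hrinv1
    have := tendsto_nhds_unique (hnorm b) h0
    exact absurd this (ne_of_gt (hξpos b))
  -- prefix lemma for ofFn words
  have hpre : ∀ m n : ℕ, m ≤ n →
      (List.ofFn fun i : Fin m => x (1 + (i.val : ℤ)))
        <+: (List.ofFn fun i : Fin n => x (1 + (i.val : ℤ))) := by
    intro m n hmn
    refine ⟨List.ofFn fun i : Fin (n - m) => x (1 + ((m + i.val : ℕ) : ℤ)), ?_⟩
    apply List.ext_getElem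
    · simp; omega
    · intro i h1 h2
      rw [List.getElem_append]
      split
      · simp
      · rename_i hlt
        simp only [List.getElem_ofFn, List.length_ofFn] at hlt ⊢
        congr 2
        push_cast
        omega
  have hsource : ∀ n k : ℕ, ∃ u : List (κ ⊕ κ'),
      (List.ofFn fun i : Fin n => x (1 + (i.val : ℤ))) <:+: Sf^[k] u := by
    intro n k
    obtain ⟨a, N, hN1, hinf⟩ := hx 1 (max n (L ^ k) + 1)
    have hpre' := hpre n (max n (L ^ k) + 1) (by omega)
    have hw : (List.ofFn fun i : Fin n => x (1 + (i.val : ℤ))) <:+: Sf^[N] [a] :=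
      hpre'.isInfix.trans hinf
    have hlen : max n (L ^ k) + 1 ≤ (Sf^[N] [a]).length := by
      have := hinf.length_le
      simpa using this
    have hNk : k ≤ N := by
      by_contra hc
      push_neg at hc
      have h1 : (Sf^[N] [a]).length ≤ L ^ N := by simpa using hgrow N [a]
      have h2 : L ^ N ≤ L ^ k := Nat.pow_le_pow_right (by omega) (by omega)
      have h3 : max n (L ^ k) + 1 ≤ L ^ k := le_trans hlen (le_trans h1 h2)
      omega
    refine ⟨Sf^[N - k] [a], ?_⟩
    have heq : Sf^[N] [a] = Sf^[k] (Sf^[N - k] [a]) := by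
      rw [← Function.iterate_add_apply, show k + (N - k) = N by omega]
    rwa [heq] at hw
  -- final limit argument
  suffices hfin : Tendsto (fun n : ℕ =>
      T (List.ofFn fun j : Fin n => x (1 + (j.val : ℤ))) / (n : ℝ)) atTop (nhds 1) by
    exact hfin
  rw [Metric.tendsto_atTop]
  intro ε hε
  have hδ : (0:ℝ) < min (ξm / 2) (ε * ξm / 8) := by positivity
  have hev : ∀ᶠ k in atTop, E k < min (ξm / 2) (ε * ξm / 8) := by
    obtain ⟨K, hK⟩ := Metric.tendsto_atTop.mp hE0 _ hδ
    filter_upwards [eventually_ge_atTop K] with k hk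
    have := hK k hk
    rwa [Real.dist_eq, sub_zero, abs_of_nonneg (hEnn k)] at this
  obtain ⟨k, hk⟩ := hev.exists
  have hk1 : E k < ξm / 2 := lt_of_lt_of_le hk (min_le_left _ _)
  have hk2 : E k < ε * ξm / 8 := lt_of_lt_of_le hk (min_le_right _ _)
  set Ck : ℝ := ∑ i ∈ Finset.range k, 2 * L * (r ^ i * E i) with hCkdef
  have hCknn : 0 ≤ Ck := Finset.sum_nonneg fun i _ => by
    have := hEnn i
    have := (rkpos i).le
    positivity
  obtain ⟨N₀, hN₀⟩ := exists_nat_gt (4 * Ck / ε)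
  refine ⟨max N₀ 1, fun n hn => ?_⟩
  have hn1 : 1 ≤ n := le_trans (le_max_right _ _) hn
  have hnN : (N₀ : ℝ) ≤ n := by exact_mod_cast le_trans (le_max_left _ _) hn
  have hnpos : (0:ℝ) < n := by exact_mod_cast hn1
  set w : List (κ ⊕ κ') := List.ofFn fun j : Fin n => x (1 + (j.val : ℤ)) with hwdef
  have hwlen : (w.length : ℝ) = n := by rw [hwdef]; simp
  obtain ⟨u, hwu⟩ := hsource n k
  obtain ⟨v, hvu, hb⟩ := hMAIN k u w hwu
  have h0 := (hb 0).1
  have h0' := (hb 0).2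
  simp only [Function.iterate_zero_apply, pow_zero, one_mul, Nat.zero_add] at h0 h0'
  have h0c : |(n : ℝ) - T w| ≤ Ck + v.length * (r ^ k * E k) := by
    rw [← hwlen]
    calc |(w.length : ℝ) - T w| = |((Sf^[0] w).length : ℝ) - r ^ 0 * T w| := by
          simp
      _ ≤ (∑ i ∈ Finset.range k, 2 * L * (r ^ (0 + i) * E (0 + i)))
            + v.length * (r ^ (0 + k) * E (0 + k)) := (hb 0).1
      _ = Ck + v.length * (r ^ k * E k) := by
          simp only [Nat.zero_add, hCkdef]
  have hvn : ((Sf^[k] v).length : ℝ) ≤ n := by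
    rw [← hwlen]
    have := (hb 0).2
    simp only [Nat.zero_add, Function.iterate_zero_apply] at this
    exact_mod_cast this
  -- residual bound : v.length * r^k ≤ 2n/ξm
  have hres : (v.length : ℝ) * r ^ k * ξm ≤ (n : ℝ) + (v.length : ℝ) * r ^ k * (ξm / 2) := by
    have hLBv := hLB k v
    have hTv : ξm * v.length ≤ T v := hTlow v
    have h1 : r ^ k * T v - ((Sf^[k] v).length : ℝ) ≤ v.length * (r ^ k * E k) := by
      have := abs_le.mp hLBv
      linarith [this.1]
    have h2 : (v.length : ℝ) * (r ^ k * E k) ≤ v.length * (r ^ k * (ξm / 2)) := by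
      apply mul_le_mul_of_nonneg_left _ (Nat.cast_nonneg _)
      exact mul_le_mul_of_nonneg_left hk1.le (rkpos k).le
    have h3 : r ^ k * (ξm * v.length) ≤ r ^ k * T v :=
      mul_le_mul_of_nonneg_left hTv (rkpos k).le
    linarith [h1, h2, h3, hvn]
  have hres2 : (v.length : ℝ) * r ^ k ≤ 2 * n / ξm := by
    rw [le_div_iff₀ hξm]
    linarith [hres]
  have hresE : (v.length : ℝ) * (r ^ k * E k) ≤ ε * n / 4 := by
    have hEknn := hEnn k
    have hvrk : (0:ℝ) ≤ (v.length : ℝ) * r ^ k := by positivity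
    calc (v.length : ℝ) * (r ^ k * E k) = ((v.length : ℝ) * r ^ k) * E k := by ring
      _ ≤ (2 * n / ξm) * E k := mul_le_mul_of_nonneg_right hres2 hEknn
      _ ≤ (2 * n / ξm) * (ε * ξm / 8) := by
          apply mul_le_mul_of_nonneg_left hk2.le
          positivity
      _ = ε * n / 4 * (ξm / ξm) := by ring
      _ = ε * n / 4 := by rw [div_self (ne_of_gt hξm), mul_one]
  have hCkn : Ck ≤ ε * n / 4 := by
    have : 4 * Ck / ε < N₀ := hN₀
    have h4 : 4 * Ck / ε ≤ (n : ℝ) := le_trans this.le hnN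
    rw [div_le_iff₀ hε] at h4
    linarith
  have hfinal : |T w - (n : ℝ)| ≤ ε * n / 2 := by
    rw [abs_sub_comm]
    calc |(n : ℝ) - T w| ≤ Ck + v.length * (r ^ k * E k) := h0c
      _ ≤ ε * n / 4 + ε * n / 4 := add_le_add hCkn hresE
      _ = ε * n / 2 := by ring
  rw [Real.dist_eq]
  have hrw : T w / n - 1 = (T w - n) / n := by field_simp
  rw [hrw, abs_div, abs_of_pos hnpos]
  rw [div_lt_iff₀ hnpos]
  calc |T w - (n:ℝ)| ≤ ε * n / 2 := hfinal
    _ < ε * n := by nlinarith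
end
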